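/- Every finite connected Ptolemaic graph G is a BDM graph: for every connected graph G' on the same vertex set with ∂(G') = ∂(G) and d_{G'}(x,y) = d_G(x,y) for all x, y ∈ ∂(G), the graph G' is isomorphic to G. -/

import Mathlib

open SimpleGraph

def gBoundary {V : Type*} (G : SimpleGraph V) : Set V :=
  {v | ∃ u, ∀ w, G.Adj v w → G.dist u w ≤ G.dist u v}

noncomputable def gEcc {V : Type*} [Fintype V] (G : SimpleGraph V) (v : V) : ℕ :=
  Finset.univ.sup fun w => G.dist v w

noncomputable def gDiam {V : Type*} [Fintype V] (G : SimpleGraph V) : ℕ :=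
  Finset.univ.sup fun v => gEcc G v

noncomputable def gRad {V : Type*} [Fintype V] (G : SimpleGraph V) : ℕ :=
  sInf (Set.range fun v => gEcc G v)

def IsBDM {V : Type*} (G : SimpleGraph V) : Prop :=
  ∀ G' : SimpleGraph V, G'.Connected → gBoundary G' = gBoundary G →
    (∀ x ∈ gBoundary G, ∀ y ∈ gBoundary G, G'.dist x y = G.dist x y) →
    Nonempty (G ≃g G')

def IsCutVertex {V : Type*} (G : SimpleGraph V) (v : V) : Prop :=
  ¬ (G.induce {u | u ≠ v}).Connected

def Chordal {V : Type*} (G : SimpleGraph V) : Prop :=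
  ∀ n, 4 ≤ n → IsEmpty (cycleGraph n ↪g G)

def DistHereditary {V : Type*} (G : SimpleGraph V) : Prop :=
  ∀ s : Set V, (G.induce s).Connected →
    ∀ u v : s, (G.induce s).dist u v = G.dist u v

def Ptolemaic {V : Type*} (G : SimpleGraph V) : Prop :=
  Chordal G ∧ DistHereditary G

def IsIntervalGraph {V : Type*} (G : SimpleGraph V) : Prop :=
  ∃ a b : V → ℝ, (∀ v, a v ≤ b v) ∧
    ∀ u v : V, u ≠ v →
      (G.Adj u v ↔ (Set.Icc (a u) (b u) ∩ Set.Icc (a v) (b v)).Nonempty)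

def IsBipartiteGraph {V : Type*} (G : SimpleGraph V) : Prop :=
  ∃ s : Set V, ∀ a b : V, G.Adj a b → ((a ∈ s ∧ b ∉ s) ∨ (a ∉ s ∧ b ∈ s))

def IsSplitGraph {V : Type*} (G : SimpleGraph V) : Prop :=
  ∃ K : Set V, (∀ a ∈ K, ∀ b ∈ K, a ≠ b → G.Adj a b) ∧
    (∀ a ∉ K, ∀ b ∉ K, ¬ G.Adj a b)

def IsFanCenter {V : Type*} (G : SimpleGraph V) (u : V) : Prop :=
  ∃ x : Fin 4 → V, Function.Injective x ∧ (∀ i, x i ≠ u) ∧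
    (∀ i, G.Adj u (x i)) ∧
    (∀ i j : Fin 4, G.Adj (x i) (x j) ↔ (i.val + 1 = j.val ∨ j.val + 1 = i.val))

namespace BDM

variable {V : Type*} {G : SimpleGraph V}

lemma walk_induce {s : Set V} {a b : V} (p : G.Walk a b)
    (hs : ∀ w ∈ p.support, w ∈ s) (ha : a ∈ s) (hb : b ∈ s) :
    ∃ q : (G.induce s).Walk ⟨a, ha⟩ ⟨b, hb⟩, q.length = p.length := by
  induction p with
  | nil => exact ⟨.nil, rfl⟩
  | @cons u c d h p ih =>
    have hc : c ∈ s := hs c (by simp)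
    obtain ⟨q, hq⟩ := ih (fun w hw => hs w (by simp [hw])) hc hb
    have hadj : (G.induce s).Adj ⟨u, ha⟩ ⟨c, hc⟩ := by
      simp only [comap_adj, Function.Embedding.coe_subtype]
      exact h
    exact ⟨.cons hadj q, by simp [hq]⟩

lemma dist_le_of_hom {α β : Type*} {A : SimpleGraph α} {B : SimpleGraph β}
    (f : A →g B) {a b : α} (h : A.Reachable a b) :
    B.dist (f a) (f b) ≤ A.dist a b := by
  obtain ⟨p, hp⟩ := h.exists_walk_length_eq_dist
  calc B.dist (f a) (f b) ≤ (p.map f).length := B.dist_le _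
  _ = p.length := p.length_map f
  _ = A.dist a b := hp

def induce_mono_hom {s t : Set V} (hst : s ⊆ t) : G.induce s →g G.induce t where
  toFun := fun x => ⟨x.1, hst x.2⟩
  map_rel' := by
    intro x y hxy
    simp only [comap_adj, Function.Embedding.coe_subtype] at hxy ⊢
    exact hxy

lemma no_c4 (hC : Chordal G) {a b c d : V} (hab : G.Adj a b) (hbc : G.Adj b c)
    (hcd : G.Adj c d) (hda : G.Adj d a) (hac : a ≠ c) (hbd : b ≠ d)
    (nac : ¬G.Adj a c) (nbd : ¬G.Adj b d) : False := by
  have hcyc : ∀ i j : Fin 4, (cycleGraph 4).Adj i j ↔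
      (i.val + 1 = j.val ∨ j.val + 1 = i.val ∨ (i.val = 0 ∧ j.val = 3) ∨ (i.val = 3 ∧ j.val = 0)) := by
    decide
  refine (hC 4 le_rfl).false ?_
  have hinj : Function.Injective ![a, b, c, d] := by
    intro i j hij
    fin_cases i <;> fin_cases j <;> simp_all
  refine ⟨⟨![a, b, c, d], hinj⟩, ?_⟩
  intro i j
  simp only [Function.Embedding.coeFn_mk]
  rw [hcyc]
  fin_cases i <;> fin_cases j <;>
    simp [hab, hbc, hcd, hda, hab.symm, hbc.symm, hcd.symm, hda.symm,
      nac, nbd, G.irrefl] <;>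
    first
      | exact fun h => nac (G.adj_symm h)
      | exact fun h => nbd (G.adj_symm h)

lemma cut_of_not_boundary [Fintype V] (hG : G.Connected) (hP : Ptolemaic G) {v : V}
    (hv : v ∉ gBoundary G) : ¬ (G.induce {u | u ≠ v}).Connected := by
  intro hconn
  classical
  have hint : ∀ u : V, ∃ w, G.Adj v w ∧ G.dist u v < G.dist u w := by
    intro u
    simp only [gBoundary, Set.mem_setOf_eq, not_exists] at hv
    have h := hv u
    push_neg at h
    obtain ⟨w, hw1, hw2⟩ := h
    exact ⟨w, hw1, hw2⟩
  -- common neighbor property: two nonadjacent neighbors of v have a common neighbor in N(v)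
  have key : ∀ a b : V, G.Adj v a → G.Adj v b → ¬ G.Adj a b → a ≠ b →
      ∃ m, m ≠ v ∧ G.Adj v m ∧ G.Adj a m ∧ G.Adj m b := by
    intro a b hva hvb hnab hab
    have ha : a ≠ v := hva.ne'
    have hb : b ≠ v := hvb.ne'
    have hd2 : G.dist a b = 2 := by
      have hub : G.dist a b ≤ 2 := by
        simpa using G.dist_le (Walk.cons hva.symm (.cons hvb .nil))
      have h0 : G.dist a b ≠ 0 := fun h0 => hab (hG.dist_eq_zero_iff.mp h0)
      have h1 : G.dist a b ≠ 1 := fun h => hnab (dist_eq_one_iff_adj.mp h)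
      omega
    set Gv := G.induce {u | u ≠ v} with hGv
    set a' : {u | u ≠ v} := ⟨a, ha⟩
    set b' : {u | u ≠ v} := ⟨b, hb⟩
    have hreach : Gv.Reachable a' b' := hconn a' b'
    have hL_lb : 2 ≤ Gv.dist a' b' := by
      have h : G.dist a b ≤ Gv.dist a' b' :=
        dist_le_of_hom (SimpleGraph.Embedding.induce {u | u ≠ v}).toHom hreach
      omega
    obtain ⟨p, hp⟩ := hreach.exists_walk_length_eq_dist
    set s₀ : Set V := Subtype.val '' {z : {u : V | u ≠ v} | z ∈ p.support} with hs₀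
    have hmem : ∀ z (hz : z ∈ p.support), (z : V) ∈ s₀ := fun z hz => ⟨z, hz, rfl⟩
    have ha₀ : a ∈ s₀ := hmem a' p.start_mem_support
    have hb₀ : b ∈ s₀ := hmem b' p.end_mem_support
    have hs₀sub : s₀ ⊆ {u | u ≠ v} := by rintro w ⟨z, hz, rfl⟩; exact z.2
    -- preconnectedness of induce s₀
    have hall : ∀ c : s₀, (G.induce s₀).Reachable c ⟨a, ha₀⟩ := by
      rintro ⟨cv, hc⟩
      obtain ⟨z, hz, rfl⟩ := hc
      let q := p.takeUntil z hz
      let Q := q.map (SimpleGraph.Embedding.induce {u : V | u ≠ v}).toHom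
      have hQsup : ∀ w ∈ Q.support, w ∈ s₀ := by
        intro w hw
        rw [Walk.support_map] at hw
        obtain ⟨z', hz', rfl⟩ := List.mem_map.mp hw
        exact hmem z' (p.support_takeUntil_subset hz hz')
      obtain ⟨Q', _⟩ := walk_induce Q hQsup ha₀ (hmem z hz)
      exact ⟨Q'.reverse⟩
    have conn₀ : (G.induce s₀).Connected := by
      have : Nonempty s₀ := ⟨⟨a, ha₀⟩⟩
      exact ⟨fun c d => (hall c).trans (hall d).symm⟩
    have hdh : (G.induce s₀).dist ⟨a, ha₀⟩ ⟨b, hb₀⟩ = G.dist a b := hP.2 s₀ conn₀ ⟨a, ha₀⟩ ⟨b, hb₀⟩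
    have hL_ub : Gv.dist a' b' ≤ 2 := by
      have hmono : Gv.dist a' b' ≤ (G.induce s₀).dist ⟨a, ha₀⟩ ⟨b, hb₀⟩ :=
        dist_le_of_hom (induce_mono_hom hs₀sub) (conn₀ ⟨a, ha₀⟩ ⟨b, hb₀⟩)
      omega
    have hL : Gv.dist a' b' = 2 := le_antisymm hL_ub hL_lb
    rw [hL] at hp
    -- extract middle vertex
    have h01 : Gv.Adj (p.getVert 0) (p.getVert 1) := p.adj_getVert_succ (by omega)
    have h12 : Gv.Adj (p.getVert 1) (p.getVert 2) := p.adj_getVert_succ (by omega)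
    have hg0 : p.getVert 0 = a' := p.getVert_zero
    have hg2 : p.getVert 2 = b' := by
      have := p.getVert_length
      rwa [hp] at this
    rw [hg0] at h01
    rw [hg2] at h12
    set m' := p.getVert 1
    have ham : G.Adj a m'.1 := h01
    have hmb : G.Adj m'.1 b := h12
    have hmv : m'.1 ≠ v := m'.2
    by_cases hvm : G.Adj v m'.1
    · exact ⟨m'.1, hmv, hvm, ham, hmb⟩
    · exact absurd (no_c4 hP.1 hva ham hmb hvb.symm hmv.symm hab hvm hnab) id
  -- main argument
  obtain ⟨w₀, hw₀, _⟩ := hint v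
  set NC : V → Finset V := fun u =>
    Finset.univ.filter (fun z => G.Adj v z ∧ (G.Adj u z ∨ u = z)) with hNC
  set Cs : Finset V := Finset.univ.filter (fun z => G.Adj v z) with hCs
  obtain ⟨u₁, hu₁, humax⟩ := Cs.exists_max_image (fun u => (NC u).card)
    ⟨w₀, by simp [hCs, hw₀]⟩
  have hvu : G.Adj v u₁ := by simpa [hCs] using hu₁
  obtain ⟨x, hvx, hxfar⟩ := hint u₁
  have hdu : G.dist u₁ v = 1 := by rw [SimpleGraph.dist_comm]; exact dist_eq_one_iff_adj.mpr hvu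
  have hnux : ¬ G.Adj u₁ x := by
    intro h
    have := dist_eq_one_iff_adj.mpr h
    omega
  have hneux : u₁ ≠ x := by
    rintro rfl
    simp [SimpleGraph.dist_self] at hxfar
  obtain ⟨m, hmv, hvm, hum, hmx⟩ := key u₁ x hvu hvx hnux hneux
  have hcard : (NC m).card ≤ (NC u₁).card := humax m (by simp [hCs, hvm])
  have hxNCm : x ∈ NC m := by simp [hNC, hvx, hmx]
  have hxNCu : x ∉ NC u₁ := by simp [hNC, hnux, hneux, hvx]
  obtain ⟨y, hyNCu, hyNCm⟩ : ∃ y ∈ NC u₁, y ∉ NC m := by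
    by_contra hcon
    push_neg at hcon
    have hss : NC u₁ ⊂ NC m := ⟨fun z hz => hcon z hz, fun hsub => hxNCu (hsub hxNCm)⟩
    have := Finset.card_lt_card hss
    omega
  have hvy : G.Adj v y := by
    have := Finset.mem_filter.mp hyNCu
    exact this.2.1
  have hym : ¬ G.Adj m y ∧ m ≠ y := by
    simp only [hNC, Finset.mem_filter, Finset.mem_univ, true_and, not_and, not_or] at hyNCm
    exact hyNCm hvy
  have huy : G.Adj u₁ y := by
    have h2 := (Finset.mem_filter.mp hyNCu).2.2
    rcases h2 with h | rfl
    · exact h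
    · exact absurd (G.adj_symm hum) hym.1
  have hyx : y ≠ x := fun h => hxNCu (h ▸ hyNCu)
  by_cases hadjyx : G.Adj y x
  · exact no_c4 hP.1 hum hmx (G.adj_symm hadjyx) (G.adj_symm huy) hneux
      (fun h => hym.2 h) hnux hym.1
  · -- induced P4 : y - u₁ - m - x dominated by v : contradicts DistHereditary
    set s₁ : Set V := {y, u₁, m, x} with hs₁
    have mem_y : y ∈ s₁ := by simp [hs₁]
    have mem_u : u₁ ∈ s₁ := by simp [hs₁]
    have mem_m : m ∈ s₁ := by simp [hs₁]
    have mem_x : x ∈ s₁ := by simp [hs₁]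
    have e1 : (G.induce s₁).Adj ⟨y, mem_y⟩ ⟨u₁, mem_u⟩ := by
      simp only [comap_adj, Function.Embedding.coe_subtype]; exact G.adj_symm huy
    have e2 : (G.induce s₁).Adj ⟨u₁, mem_u⟩ ⟨m, mem_m⟩ := by
      simp only [comap_adj, Function.Embedding.coe_subtype]; exact hum
    have e3 : (G.induce s₁).Adj ⟨m, mem_m⟩ ⟨x, mem_x⟩ := by
      simp only [comap_adj, Function.Embedding.coe_subtype]; exact hmx
    have hall : ∀ c : s₁, (G.induce s₁).Reachable c ⟨y, mem_y⟩ := by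
      rintro ⟨cv, hc⟩
      have hc' : cv = y ∨ cv = u₁ ∨ cv = m ∨ cv = x := by simpa [hs₁] using hc
      rcases hc' with rfl | rfl | rfl | rfl
      · exact Reachable.refl _
      · exact e1.symm.reachable
      · exact (e2.symm.reachable).trans e1.symm.reachable
      · exact ((e3.symm.reachable).trans e2.symm.reachable).trans e1.symm.reachable
    have conn₁ : (G.induce s₁).Connected := by
      have : Nonempty s₁ := ⟨⟨y, mem_y⟩⟩
      exact ⟨fun c d => (hall c).trans (hall d).symm⟩
    have hdh : (G.induce s₁).dist ⟨y, mem_y⟩ ⟨x, mem_x⟩ = G.dist y x :=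
      hP.2 s₁ conn₁ ⟨y, mem_y⟩ ⟨x, mem_x⟩
    have hle2 : G.dist y x ≤ 2 := by
      simpa using G.dist_le (Walk.cons (G.adj_symm hvy) (.cons hvx .nil))
    set D := (G.induce s₁).dist ⟨y, mem_y⟩ ⟨x, mem_x⟩ with hD
    have hD0 : D ≠ 0 := by
      intro h0
      have := (conn₁ ⟨y, mem_y⟩ ⟨x, mem_x⟩).dist_eq_zero_iff.mp h0
      exact hyx (congrArg Subtype.val this)
    have hD1 : D ≠ 1 := by
      intro h1
      have hadj := dist_eq_one_iff_adj.mp h1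
      exact hadjyx hadj
    have hD2 : D ≠ 2 := by
      intro h2
      obtain ⟨q, hq⟩ := (conn₁ ⟨y, mem_y⟩ ⟨x, mem_x⟩).exists_walk_length_eq_dist
      rw [← hD, h2] at hq
      have h01 : (G.induce s₁).Adj (q.getVert 0) (q.getVert 1) := q.adj_getVert_succ (by omega)
      have h12 : (G.induce s₁).Adj (q.getVert 1) (q.getVert 2) := q.adj_getVert_succ (by omega)
      have hg0 : q.getVert 0 = ⟨y, mem_y⟩ := q.getVert_zero
      have hg2 : q.getVert 2 = ⟨x, mem_x⟩ := by
        have := q.getVert_length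
        rwa [hq] at this
      rw [hg0] at h01
      rw [hg2] at h12
      set wm := q.getVert 1
      have hyw : G.Adj y wm.1 := h01
      have hwx : G.Adj wm.1 x := h12
      have hwm : wm.1 = y ∨ wm.1 = u₁ ∨ wm.1 = m ∨ wm.1 = x := by
        have h := wm.2
        simp only [hs₁, Set.mem_insert_iff, Set.mem_singleton_iff] at h
        exact h
      rcases hwm with hw | hw | hw | hw
      · rw [hw] at hyw; exact G.irrefl hyw
      · rw [hw] at hwx; exact hnux hwx
      · rw [hw] at hyw; exact hym.1 (G.adj_symm hyw)
      · rw [hw] at hwx; exact G.irrefl hwx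
    omega

lemma geo [Fintype V] (hG : G.Connected) (hP : Ptolemaic G) {v : V} (hv : v ∉ gBoundary G) :
    ∃ x ∈ gBoundary G, ∃ y ∈ gBoundary G,
      ∀ u : V, G.dist u x = G.dist u v + G.dist v x ∨
        G.dist u y = G.dist u v + G.dist v y := by
  classical
  have hcut := cut_of_not_boundary hG hP hv
  set Gv := G.induce {u : V | u ≠ v} with hGv
  obtain ⟨w₀, hw₀⟩ : ∃ w, G.Adj v w := by
    simp only [gBoundary, Set.mem_setOf_eq, not_exists] at hv
    have h := hv v
    push_neg at h
    obtain ⟨w, hw, _⟩ := h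
    exact ⟨w, hw⟩
  have hne : Nonempty {u : V | u ≠ v} := ⟨⟨w₀, hw₀.ne'⟩⟩
  obtain ⟨A, B, hAB⟩ : ∃ a b : {u : V | u ≠ v}, ¬ Gv.Reachable a b := by
    by_contra hc
    push_neg at hc
    exact hcut ⟨fun a b => hc a b⟩
  have split : ∀ (z : V) (hz : z ≠ v) (t : V) (ht : t ≠ v),
      ¬ Gv.Reachable ⟨z, hz⟩ ⟨t, ht⟩ →
      G.dist z t = G.dist z v + G.dist v t := by
    intro z hz t ht hnr
    have hpass : ∀ p : G.Walk z t, v ∈ p.support := by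
      intro p
      by_contra hvp
      have hs : ∀ w ∈ p.support, w ∈ {u : V | u ≠ v} := fun w hw h => hvp (h ▸ hw)
      obtain ⟨q, _⟩ := walk_induce p hs hz ht
      exact hnr ⟨q⟩
    obtain ⟨p, hp⟩ := hG.exists_walk_length_eq_dist z t
    have hvp := hpass p
    have h1 : G.dist z v ≤ (p.takeUntil v hvp).length := G.dist_le _
    have h2 : G.dist v t ≤ (p.dropUntil v hvp).length := G.dist_le _
    have h3 : (p.takeUntil v hvp).length + (p.dropUntil v hvp).length = p.length := by
      rw [← Walk.length_append, p.take_spec hvp]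
    have h4 := hG.dist_triangle (u := z) (v := v) (w := t)
    omega
  set SA : Finset V := Finset.univ.filter (fun z => ∃ h : z ≠ v, Gv.Reachable ⟨z, h⟩ A) with hSA
  set SB : Finset V := Finset.univ.filter (fun z => ∃ h : z ≠ v, Gv.Reachable ⟨z, h⟩ B) with hSB
  have hAmem : A.1 ∈ SA := by
    simp only [hSA, Finset.mem_filter, Finset.mem_univ, true_and]
    exact ⟨A.2, Reachable.refl _⟩
  have hBmem : B.1 ∈ SB := by
    simp only [hSB, Finset.mem_filter, Finset.mem_univ, true_and]
    exact ⟨B.2, Reachable.refl _⟩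
  obtain ⟨x, hxS, hxmax⟩ := SA.exists_max_image (fun z => G.dist v z) ⟨A.1, hAmem⟩
  obtain ⟨y, hyS, hymax⟩ := SB.exists_max_image (fun z => G.dist v z) ⟨B.1, hBmem⟩
  obtain ⟨hxv, hxr⟩ : ∃ h : x ≠ v, Gv.Reachable ⟨x, h⟩ A := by
    simpa [hSA] using hxS
  obtain ⟨hyv, hyr⟩ : ∃ h : y ≠ v, Gv.Reachable ⟨y, h⟩ B := by
    simpa [hSB] using hyS
  have hxb : x ∈ gBoundary G := by
    refine ⟨v, ?_⟩
    intro w hxw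
    by_cases hwv : w = v
    · subst hwv; simp [SimpleGraph.dist_self]
    · have hadj : Gv.Adj ⟨x, hxv⟩ ⟨w, hwv⟩ := by
        simp only [hGv, comap_adj, Function.Embedding.coe_subtype]
        exact hxw
      have hwS : w ∈ SA := by
        simp only [hSA, Finset.mem_filter, Finset.mem_univ, true_and]
        exact ⟨hwv, hadj.symm.reachable.trans hxr⟩
      exact hxmax w hwS
  have hyb : y ∈ gBoundary G := by
    refine ⟨v, ?_⟩
    intro w hyw
    by_cases hwv : w = v
    · subst hwv; simp [SimpleGraph.dist_self]
    · have hadj : Gv.Adj ⟨y, hyv⟩ ⟨w, hwv⟩ := by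
        simp only [hGv, comap_adj, Function.Embedding.coe_subtype]
        exact hyw
      have hwS : w ∈ SB := by
        simp only [hSB, Finset.mem_filter, Finset.mem_univ, true_and]
        exact ⟨hwv, hadj.symm.reachable.trans hyr⟩
      exact hymax w hwS
  refine ⟨x, hxb, y, hyb, ?_⟩
  intro u
  by_cases huv : u = v
  · left; subst huv; simp [SimpleGraph.dist_self]
  · have hchoice : ¬ Gv.Reachable ⟨u, huv⟩ ⟨x, hxv⟩ ∨ ¬ Gv.Reachable ⟨u, huv⟩ ⟨y, hyv⟩ := by
      by_contra hc
      push_neg at hc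
      exact hAB (((hxr.symm.trans hc.1.symm).trans hc.2).trans hyr)
    rcases hchoice with h | h
    · left; exact split u huv x hxv h
    · right; exact split u huv y hyv h

/-- toolkit from t1 -/
lemma split_walk {a b : V} (p : G.Walk a b) (j : ℕ) (hj : j ≤ p.length) :
    ∃ (m : V) (q : G.Walk a m) (r : G.Walk m b), q.length = j ∧ r.length + j = p.length := by
  induction p generalizing j with
  | nil =>
    simp only [SimpleGraph.Walk.length_nil, Nat.le_zero] at hj
    subst hj
    exact ⟨_, .nil, .nil, by simp, by simp⟩
  | cons h p ih =>
    cases j with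
    | zero => exact ⟨_, .nil, .cons h p, by simp, by simp⟩
    | succ j =>
      obtain ⟨m, q, r, hq, hr⟩ := ih j (by simpa using hj)
      exact ⟨m, .cons h q, r, by simp [hq], by simp; omega⟩

lemma exists_pos_vertex (hG : G.Connected) (x y : V) (j : ℕ) (hj : j ≤ G.dist x y) :
    ∃ w, G.dist x w = j ∧ G.dist w y + j = G.dist x y := by
  obtain ⟨p, hp⟩ := hG.exists_walk_length_eq_dist x y
  obtain ⟨m, q, r, hq, hr⟩ := split_walk p j (by omega)
  have h1 := G.dist_le q
  have h2 := G.dist_le r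
  have h3 := hG.dist_triangle (u := x) (v := m) (w := y)
  exact ⟨m, by omega, by omega⟩

lemma ext_boundary [Fintype V] {H : SimpleGraph V} (hH : H.Connected) (u v : V) :
    ∃ b ∈ gBoundary H, H.dist u b = H.dist u v + H.dist v b := by
  classical
  set T : Finset V := Finset.univ.filter (fun z => H.dist u z = H.dist u v + H.dist v z) with hT
  have hvT : v ∈ T := by simp [hT]
  obtain ⟨b, hbT, hbmax⟩ := T.exists_max_image (fun z => H.dist u z) ⟨v, hvT⟩
  have hbeq : H.dist u b = H.dist u v + H.dist v b := by
    simpa [hT] using hbT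
  refine ⟨b, ⟨u, ?_⟩, hbeq⟩
  intro w hbw
  by_contra hlt
  push_neg at hlt
  have hadj1 : H.dist b w = 1 := dist_eq_one_iff_adj.mpr hbw
  have h1 : H.dist u w ≤ H.dist u b + 1 := by
    have := hH.dist_triangle (u := u) (v := b) (w := w); omega
  have h2 : H.dist u w ≤ H.dist u v + H.dist v w := hH.dist_triangle
  have h3 : H.dist v w ≤ H.dist v b + 1 := by
    have := hH.dist_triangle (u := v) (v := b) (w := w); omega
  have hwT : w ∈ T := by
    simp only [hT, Finset.mem_filter, Finset.mem_univ, true_and]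
    omega
  have := hbmax w hwT
  omega

end BDM

open BDM

theorem ptolemaic_isBDM {V : Type*} [Fintype V] (G : SimpleGraph V)
    (hG : G.Connected) (hP : Ptolemaic G) : IsBDM G := by
  intro G' hG' hB hd
  classical
  -- Step 1: every G-vertex has a G'-vertex with the same boundary distance vector
  have key : ∀ v : V, ∃ w : V, ∀ b ∈ gBoundary G, G'.dist w b = G.dist v b := by
    intro v
    by_cases hv : v ∈ gBoundary G
    · exact ⟨v, fun b hb => hd v hv b hb⟩
    · obtain ⟨x, hx, y, hy, hgeo⟩ := geo hG hP hv
      have htxy : G.dist x y = G.dist x v + G.dist v y := by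
        rcases hgeo x with h | h
        · exfalso
          rw [SimpleGraph.dist_self] at h
          have : G.dist x v = 0 := by omega
          have := hG.dist_eq_zero_iff.mp this
          subst this
          exact hv hx
        · exact h
      set j := G.dist x v with hj
      have hdxy : G'.dist x y = G.dist x y := hd x hx y hy
      have hjle : j ≤ G'.dist x y := by omega
      obtain ⟨w, hw1, hw2⟩ := exists_pos_vertex hG' x y j hjle
      have hwx : G'.dist w x = G.dist v x := by
        rw [SimpleGraph.dist_comm, hw1, hj, SimpleGraph.dist_comm]
      have hwy : G'.dist w y = G.dist v y := by omega
      -- Step 1a : lower bounds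
      have step1 : ∀ u ∈ gBoundary G, G.dist v u ≤ G'.dist w u := by
        intro u hu
        rcases hgeo u with h | h
        · have e1 : G.dist u x = G'.dist u x := (hd u hu x hx).symm
          have e2 : G'.dist u x ≤ G'.dist u w + G'.dist w x := hG'.dist_triangle
          rw [hwx] at e2
          have := SimpleGraph.dist_comm (G := G') (u := u) (v := w)
          have := SimpleGraph.dist_comm (G := G) (u := v) (v := u)
          omega
        · have e1 : G.dist u y = G'.dist u y := (hd u hu y hy).symm
          have e2 : G'.dist u y ≤ G'.dist u w + G'.dist w y := hG'.dist_triangle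
          rw [hwy] at e2
          have := SimpleGraph.dist_comm (G := G') (u := u) (v := w)
          have := SimpleGraph.dist_comm (G := G) (u := v) (v := u)
          omega
      refine ⟨w, ?_⟩
      intro b hb
      obtain ⟨c, hcB', hcd⟩ := ext_boundary hG' b w
      have hcB : c ∈ gBoundary G := hB ▸ hcB'
      have e1 : G'.dist b c = G.dist b c := hd b hb c hcB
      have e2 : G.dist b c ≤ G.dist b v + G.dist v c := hG.dist_triangle
      have e3 := step1 c hcB
      have e4 := step1 b hb
      have c1 := SimpleGraph.dist_comm (G := G') (u := b) (v := w)
      have c2 := SimpleGraph.dist_comm (G := G) (u := b) (v := v)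
      omega
  choose ψ hψ using key
  have hinj : Function.Injective ψ := by
    intro v1 v2 h
    have heq : ∀ b ∈ gBoundary G, G.dist v1 b = G.dist v2 b := by
      intro b hb
      rw [← hψ v1 b hb, h, hψ v2 b hb]
    obtain ⟨b, hbB, hb⟩ := ext_boundary hG v1 v2
    have := heq b hbB
    have h0 : G.dist v1 v2 = 0 := by omega
    exact hG.dist_eq_zero_iff.mp h0
  have hbij : Function.Bijective ψ := (Finite.injective_iff_bijective).mp hinj
  have hdist : ∀ v1 v2 : V, G'.dist (ψ v1) (ψ v2) = G.dist v1 v2 := by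
    intro v1 v2
    have hle : G'.dist (ψ v1) (ψ v2) ≤ G.dist v1 v2 := by
      obtain ⟨b, hbB', hb⟩ := ext_boundary hG' (ψ v1) (ψ v2)
      have hbB : b ∈ gBoundary G := hB ▸ hbB'
      rw [hψ v1 b hbB, hψ v2 b hbB] at hb
      have := hG.dist_triangle (u := v1) (v := v2) (w := b)
      omega
    have hge : G.dist v1 v2 ≤ G'.dist (ψ v1) (ψ v2) := by
      obtain ⟨b, hbB, hb⟩ := ext_boundary hG v1 v2
      have e1 := hψ v1 b hbB
      have e2 := hψ v2 b hbB
      have := hG'.dist_triangle (u := ψ v1) (v := ψ v2) (w := b)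
      omega
    omega
  refine ⟨⟨Equiv.ofBijective ψ hbij, ?_⟩⟩
  intro a b
  show G'.Adj (ψ a) (ψ b) ↔ G.Adj a b
  rw [← dist_eq_one_iff_adj, ← dist_eq_one_iff_adj, hdist]
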